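/- Extreme points of the state-action polytope have at most |S| supported pairs: any vertex y of the polytope {y ≥ 0 : ∑_{s,a} y(s,a) = 1, ∑_a y(s',a) − ∑_{s,a} p(s'|s,a) y(s,a) = 0 ∀ s'} has at most |S| nonzero coordinates. -/

import Mathlib

theorem stmt_10 {S A : Type*} [Fintype S] [Fintype A] [Nonempty S] [Nonempty A]
    [DecidableEq (S × A)]
    (p : S → A → S → ℝ)
    (hp0 : ∀ s a s', 0 ≤ p s a s')
    (hp1 : ∀ s a, ∑ s', p s a s' = 1)
    (P : Set (S × A → ℝ))
    (hP : P = {y | (∀ sa, 0 ≤ y sa) ∧ (∑ sa : S × A, y sa = 1) ∧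
      (∀ s', ∑ a, y (s', a) = ∑ s, ∑ a, p s a s' * y (s, a))})
    (y : S × A → ℝ) (hy : y ∈ Set.extremePoints ℝ P) :
    (Finset.univ.filter (fun sa => y sa ≠ 0)).card ≤ Fintype.card S := by
  classical
  by_contra hcard
  push_neg at hcard
  set T : Finset (S × A) := Finset.univ.filter (fun sa => y sa ≠ 0) with hT
  obtain ⟨hyP, hyext⟩ := hy
  have hyP' := hyP
  rw [hP] at hyP'
  obtain ⟨hy0, hysum, hyflow⟩ := hyP'
  have s₀ : S := Classical.arbitrary S
  -- extension from functions on T to functions on S × A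
  let E : ({sa // sa ∈ T} → ℝ) →ₗ[ℝ] (S × A → ℝ) :=
  { toFun := fun z sa => if h : sa ∈ T then z ⟨sa, h⟩ else 0
    map_add' := by intro a b; funext sa; by_cases h : sa ∈ T <;> simp [h]
    map_smul' := by intro c a; funext sa; by_cases h : sa ∈ T <;> simp [h] }
  -- constraint map
  let G : (S × A → ℝ) →ₗ[ℝ] (S → ℝ) :=
  { toFun := fun w s' => if s' = s₀ then ∑ sa : S × A, w sa
      else (∑ a, w (s', a)) - ∑ s, ∑ a, p s a s' * w (s, a)
    map_add' := by
      intro a b; funext s'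
      by_cases h : s' = s₀ <;>
        simp [h, Finset.sum_add_distrib, mul_add] <;> ring
    map_smul' := by
      intro c a; funext s'
      by_cases h : s' = s₀ <;>
        simp [h, Finset.mul_sum, mul_sub, mul_left_comm] }
  -- dimension count: G ∘ E is not injective
  have hni : ¬ Function.Injective (G.comp E) := by
    intro hinj
    have hle := LinearMap.finrank_le_finrank_of_injective hinj
    rw [Module.finrank_fintype_fun_eq_card, Module.finrank_fintype_fun_eq_card,
      Fintype.card_coe] at hle
    omega
  obtain ⟨a, b, hab, hne⟩ := Function.not_injective_iff.mp hni
  set z : S × A → ℝ := E (a - b) with hzdef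
  have hGz : G z = 0 := by
    rw [hzdef, map_sub, map_sub]
    have : G (E a) = G (E b) := hab
    rw [this, sub_self]
  -- z is supported on T
  have hz_supp : ∀ sa, sa ∉ T → z sa = 0 := by
    intro sa hsa
    simp only [hzdef, E, LinearMap.coe_mk, AddHom.coe_mk, dif_neg hsa]
  -- z is nonzero somewhere
  obtain ⟨t₀, ht₀⟩ : ∃ t : {sa // sa ∈ T}, (a - b) t ≠ 0 := by
    by_contra h
    push_neg at h
    apply hne
    have : a - b = 0 := funext h
    exact sub_eq_zero.mp this
  have hz_ne : z t₀.1 ≠ 0 := by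
    simpa only [hzdef, E, LinearMap.coe_mk, AddHom.coe_mk, dif_pos t₀.2,
      Subtype.coe_eta] using ht₀
  -- sum of z is zero
  have hzsum : ∑ sa : S × A, z sa = 0 := by
    have := congrFun hGz s₀
    simpa only [G, LinearMap.coe_mk, AddHom.coe_mk, if_pos rfl, ↓reduceIte, Pi.zero_apply] using this
  -- flow of z vanishes off s₀
  have hflow_ne : ∀ s', s' ≠ s₀ →
      (∑ a, z (s', a)) - ∑ s, ∑ a, p s a s' * z (s, a) = 0 := by
    intro s' hs'
    have := congrFun hGz s'
    simpa only [G, LinearMap.coe_mk, AddHom.coe_mk, if_neg hs', Pi.zero_apply] using this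
  -- total flow vanishes, hence flow at s₀ vanishes too
  have htot : ∑ s', ((∑ a, z (s', a)) - ∑ s, ∑ a, p s a s' * z (s, a)) = 0 := by
    rw [Finset.sum_sub_distrib]
    have h1 : ∑ s', ∑ a, z (s', a) = ∑ sa : S × A, z sa :=
      (Fintype.sum_prod_type _).symm
    have h2 : ∑ s', ∑ s, ∑ a, p s a s' * z (s, a) = ∑ sa : S × A, z sa := by
      rw [Finset.sum_comm]
      have : ∀ s, ∑ s', ∑ a, p s a s' * z (s, a) = ∑ a, z (s, a) := by
        intro s
        rw [Finset.sum_comm]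
        refine Finset.sum_congr rfl fun a _ => ?_
        rw [← Finset.sum_mul, hp1, one_mul]
      rw [Finset.sum_congr rfl fun s _ => this s, ← Fintype.sum_prod_type]
    rw [h1, h2, sub_self]
  have hflow : ∀ s', (∑ a, z (s', a)) = ∑ s, ∑ a, p s a s' * z (s, a) := by
    intro s'
    rcases eq_or_ne s' s₀ with h | h
    · subst h
      have hsingle : ∑ t, ((∑ a, z (t, a)) - ∑ s, ∑ a, p s a t * z (s, a)) =
          (∑ a, z (s', a)) - ∑ s, ∑ a, p s a s' * z (s, a) := by
        refine Finset.sum_eq_single_of_mem s' (Finset.mem_univ _) fun t _ ht => ?_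
        exact hflow_ne t ht
      have := hsingle.symm.trans htot
      linarith [this]
    · have := hflow_ne s' h
      linarith [this]
  -- positivity bound
  have hTne : T.Nonempty := by
    rw [← Finset.card_pos]; omega
  have hy_pos : ∀ sa ∈ T, 0 < y sa := by
    intro sa hsa
    rw [hT, Finset.mem_filter] at hsa
    exact lt_of_le_of_ne (hy0 sa) (Ne.symm hsa.2)
  set m : ℝ := T.inf' hTne y with hm
  have hm_pos : 0 < m := by
    rw [hm]
    exact (Finset.lt_inf'_iff _).mpr fun sa hsa => hy_pos sa hsa
  have hm_le : ∀ sa ∈ T, m ≤ y sa := fun sa hsa => Finset.inf'_le _ hsa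
  set M : ℝ := Finset.univ.sup' Finset.univ_nonempty (fun sa => |z sa|) with hM
  have hM_le : ∀ sa, |z sa| ≤ M := by
    intro sa; rw [hM]; exact Finset.le_sup' (fun sa => |z sa|) (Finset.mem_univ sa)
  have hM_nonneg : 0 ≤ M := le_trans (abs_nonneg (z t₀.1)) (hM_le t₀.1)
  set ε : ℝ := m / (M + 1) with hε
  have hε_pos : 0 < ε := div_pos hm_pos (by linarith)
  have hbound : ∀ sa, ε * |z sa| ≤ y sa := by
    intro sa
    by_cases hsa : sa ∈ T
    · have h1 : ε * |z sa| ≤ ε * M := by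
        apply mul_le_mul_of_nonneg_left (hM_le sa) hε_pos.le
      have h2 : ε * M ≤ m := by
        rw [hε, div_mul_eq_mul_div, div_le_iff₀ (by linarith : (0:ℝ) < M + 1)]
        nlinarith
      exact le_trans h1 (le_trans h2 (hm_le sa hsa))
    · rw [hz_supp sa hsa]
      simpa using hy0 sa
  -- the two perturbed points
  have hmem : ∀ (σ : ℝ), |σ| = 1 → (fun sa => y sa + σ * ε * z sa) ∈ P := by
    intro σ hσ
    rw [hP]
    simp only [Set.mem_setOf_eq]
    refine ⟨fun sa => ?_, ?_, fun s' => ?_⟩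
    · show 0 ≤ y sa + σ * ε * z sa
      have h1 : |σ * ε * z sa| ≤ y sa := by
        rw [abs_mul, abs_mul, hσ, one_mul, abs_of_pos hε_pos]
        exact hbound sa
      have := neg_abs_le (σ * ε * z sa)
      linarith
    · rw [Finset.sum_add_distrib, hysum]
      have : ∑ sa : S × A, σ * ε * z sa = 0 := by
        rw [← Finset.mul_sum, hzsum, mul_zero]
      rw [this, add_zero]
    · rw [Finset.sum_add_distrib, ← Finset.mul_sum, hflow s', hyflow s']
      rw [Finset.mul_sum]
      rw [← Finset.sum_add_distrib]
      refine Finset.sum_congr rfl fun s _ => ?_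
      rw [Finset.mul_sum, ← Finset.sum_add_distrib]
      refine Finset.sum_congr rfl fun aa _ => ?_
      ring
  have h1 := hmem 1 (by norm_num)
  have h2 := hmem (-1) (by norm_num)
  have hopen : y ∈ openSegment ℝ (fun sa => y sa + 1 * ε * z sa)
      (fun sa => y sa + (-1) * ε * z sa) := by
    refine ⟨1/2, 1/2, by norm_num, by norm_num, by norm_num, ?_⟩
    funext sa
    simp only [Pi.add_apply, Pi.smul_apply, smul_eq_mul]
    ring
  have := hyext h1 h2 hopen
  have hc := congrFun this t₀.1
  simp only [one_mul] at hc
  have : ε * z t₀.1 = 0 := by linarith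
  rcases mul_eq_zero.mp this with h | h
  · exact absurd h (ne_of_gt hε_pos)
  · exact hz_ne h
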